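/- arXiv:1406.7608 — 3 statements merged into one kernel-verified Lean document; each statement's English description precedes it below -/
import Mathlib

section
/- Token circulation: let n ≥ 1 and let tok_i, send_i : ℕ → Prop for i ∈ ℤ/nℤ satisfy: (1) at time 0 exactly one index i has tok_i(0); (2) for all i, k: send_i(k) → tok_i(k); (3) for all i, k: tok_i(k) ∧ ¬send_i(k) → tok_i(k+1); (4) for all i, k: ¬tok_i(k) ∧ ¬send_{i−1}(k) → ¬tok_i(k+1); (5) for all i, k: send_i(k) → ¬tok_i(k+1) ∧ tok_{i+1}(k+1); (6) for all i, k: tok_i(k) → ∃m ≥ k, send_i(m). Then at every time k exactly one index i has tok_i(k), and every index has the token infinitely often: for all i and k there exists m ≥ k with tok_i(m). -/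
/-- token circulation: let `n ≥ 1` and let `tok i k` / `send i k`
(for `i ∈ ℤ/nℤ`, `k ∈ ℕ`) satisfy:
(1) at time 0 exactly one index has the token;
(2) a process sends only if it has the token;
(3) a process that has the token and does not send keeps it;
(4) a process without the token does not acquire it unless its ring predecessor sends;
(5) a sent token is received by the ring successor in the next step (and lost by the sender);
(6) a process holding the token eventually sends it.
Then at every time exactly one index has the token, and every index has the token
infinitely often. -/
theorem token_circulation (n : ℕ) (hn : 1 ≤ n)
    (tok send : ZMod n → ℕ → Prop)
    (h1 : ∃! i : ZMod n, tok i 0)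
    (h2 : ∀ i k, send i k → tok i k)
    (h3 : ∀ i k, tok i k → ¬ send i k → tok i (k + 1))
    (h4 : ∀ i k, ¬ tok i k → ¬ send (i - 1) k → ¬ tok i (k + 1))
    (h5 : ∀ i k, send i k → ¬ tok i (k + 1) ∧ tok (i + 1) (k + 1))
    (h6 : ∀ i k, tok i k → ∃ m, k ≤ m ∧ send i m) :
    (∀ k, ∃! i : ZMod n, tok i k) ∧ (∀ (i : ZMod n) (k : ℕ), ∃ m, k ≤ m ∧ tok i m) := by
  haveI : NeZero n := ⟨by omega⟩
  have huniq : ∀ k, ∃! i : ZMod n, tok i k := by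
    intro k
    induction k with
    | zero => exact h1
    | succ k ih =>
      obtain ⟨i, hi, hiu⟩ := ih
      by_cases hs : send i k
      · refine ⟨i + 1, (h5 i k hs).2, ?_⟩
        intro j hj
        by_contra hne
        by_cases htj : tok j k
        · have : j = i := hiu j htj
          subst this
          exact (h5 j k hs).1 hj
        · have hns : ¬ send (j - 1) k := by
            intro hsj
            have : j - 1 = i := hiu _ (h2 _ _ hsj)
            apply hne; rw [← this]; ring
          exact h4 j k htj hns hj
      · refine ⟨i, h3 i k hi hs, ?_⟩
        intro j hj
        by_contra hne
        by_cases htj : tok j k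
        · exact hne (hiu j htj)
        · have hns : ¬ send (j - 1) k := by
            intro hsj
            have : j - 1 = i := hiu _ (h2 _ _ hsj)
            subst this; exact hs hsj
          exact h4 j k htj hns hj
  refine ⟨huniq, ?_⟩
  have key : ∀ (d : ℕ) (i : ZMod n) (k : ℕ), tok i k → ∃ m, k ≤ m ∧ tok (i + d) m := by
    intro d
    induction d with
    | zero => intro i k h; exact ⟨k, le_refl _, by simpa using h⟩
    | succ d ihd =>
      intro i k h
      obtain ⟨m, hkm, hsm⟩ := h6 i k h
      have : tok (i + 1) (m + 1) := (h5 i m hsm).2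
      obtain ⟨m', hm', ht'⟩ := ihd (i + 1) (m + 1) this
      refine ⟨m', by omega, ?_⟩
      have : i + 1 + (d : ZMod n) = i + ((d : ℕ) + 1 : ℕ) := by push_cast; ring
      rwa [this] at ht'
  intro i k
  obtain ⟨j, hj, -⟩ := huniq k
  obtain ⟨m, hm, ht⟩ := key (i - j).val j k hj
  refine ⟨m, hm, ?_⟩
  rwa [ZMod.natCast_val, ZMod.cast_id, add_sub_cancel] at ht
end

section
/- Soundness of localization of assumptions in token rings: let TR(j) denote the conjunction of the local token-ring guarantees □(send_j → tok_j), □(tok_j ∧ ¬send_j → X tok_j), □(¬tok_j ∧ ¬rcv_j → X ¬tok_j), and □(tok_j → ◇send_j), interpreted on the local run of process j. Let ass(j) and gua(j) be LTL formulas over the inputs and outputs of process j. Suppose that for some n ≥ 2 the synchronous token ring P^{R(n)} satisfies the 1-indexed specification ∀j. A[ (ass(j) → TR(j)) ∧ ((ass(j) ∧ □◇tok_j) → gua(j)) ]. Then P^{R(n)} satisfies A_{∀i.ass(i)} ∀j. (gua(j) ∧ TR(j)): every run on which every process's local run satisfies ass also has every process's local run satisfying gua(j) ∧ TR(j). -/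
/-! ## Deeply embedded LTL -/

/-- LTL formulas over atomic propositions of type `α`. -/
inductive LTL (α : Type) : Type
  | tru : LTL α
  | atom : α → LTL α
  | neg : LTL α → LTL α
  | conj : LTL α → LTL α → LTL α
  | next : LTL α → LTL α
  | untl : LTL α → LTL α → LTL α

namespace LTL

/-- Satisfaction of an LTL formula at position `k` of the infinite word `w`
(a word assigns to each position the set of atomic propositions holding there). -/
def Sat {α : Type} (w : ℕ → α → Prop) : LTL α → ℕ → Prop
  | tru, _ => True
  | atom a, k => w k a
  | neg φ, k => ¬ Sat w φ k
  | conj φ ψ, k => Sat w φ k ∧ Sat w ψ k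
  | next φ, k => Sat w φ (k + 1)
  | untl φ ψ, k => ∃ m, k ≤ m ∧ Sat w ψ m ∧ ∀ l, k ≤ l → l < m → Sat w φ l

/-- `LTL\X` : formulas not using the next-time operator. -/
def NoNext {α : Type} : LTL α → Prop
  | tru => True
  | atom _ => True
  | neg φ => NoNext φ
  | conj φ ψ => NoNext φ ∧ NoNext ψ
  | next _ => False
  | untl φ ψ => NoNext φ ∧ NoNext ψ

/-- Implication, as a derived connective. -/
def imp {α : Type} (φ ψ : LTL α) : LTL α := neg (conj φ (neg ψ))

/-- "Eventually" (◇). -/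
def ev {α : Type} (φ : LTL α) : LTL α := untl tru φ

/-- "Always" (□). -/
def alw {α : Type} (φ : LTL α) : LTL α := neg (ev (neg φ))

end LTL

/-- Boolean (propositional) formulas over atoms of type `α`. -/
inductive PropForm (α : Type) : Type
  | tru : PropForm α
  | atom : α → PropForm α
  | neg : PropForm α → PropForm α
  | conj : PropForm α → PropForm α → PropForm α

/-- A propositional formula over input variables, seen as an LTL formula over
output-or-input atoms (inputs are injected on the right). -/
def PropForm.toLTL {O I : Type} : PropForm I → LTL (O ⊕ I)
  | .tru => .tru
  | .atom a => .atom (Sum.inr a)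
  | .neg p => .neg p.toLTL
  | .conj p q => .conj p.toLTL q.toLTL

/-! ## Process templates and token rings -/

/-- The ring successor `v ⊕ 1` of a vertex of the ring `R(n)`. -/
def ringSucc {n : ℕ} (v : Fin n) : Fin n :=
  ⟨(v.val + 1) % n, Nat.mod_lt _ (Nat.lt_of_le_of_lt (Nat.zero_le _) v.isLt)⟩

/-- The raw data of a process: token states, output labelling, the two initial
states (with/without token) and the transition relation, over output variables `O`
and input variables `I` (an input letter is a set of input variables). -/
structure RawProc (Q O I : Type) : Type where
  tok : Q → Prop
  lam : Q → O → Prop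
  iotaT : Q
  iotaN : Q
  delta : Q → (I → Prop) → Q → Prop

namespace RawProc

variable {Q O I : Type}

/-- Internal transition of the token ring: the processes in `M` simultaneously take
transitions, none of them sends (`snd`) or receives (`rcv`) the token, all others keep
their state. -/
def internalStep (P : RawProc Q O I) (snd : O) (rcv : I) {n : ℕ} (M : Set (Fin n))
    (s : Fin n → Q) (inp : Fin n → I → Prop) (s' : Fin n → Q) : Prop :=
  (∀ v ∈ M, ¬ P.lam (s v) snd ∧ ¬ inp v rcv ∧ P.delta (s v) (inp v) (s' v)) ∧
    ∀ v, v ∉ M → s' v = s v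

/-- Token-passing transition with sender `v`: `v ∈ M` is the only process of `M`
outputting `snd`, its ring successor is in `M` and is the only process of `M` reading
`rcv`; all processes of `M` take transitions, all others keep their state. -/
def tokenStepFrom (P : RawProc Q O I) (snd : O) (rcv : I) {n : ℕ} (v : Fin n)
    (M : Set (Fin n)) (s : Fin n → Q) (inp : Fin n → I → Prop) (s' : Fin n → Q) : Prop :=
  v ∈ M ∧ ringSucc v ∈ M ∧
  P.lam (s v) snd ∧ (∀ u ∈ M, u ≠ v → ¬ P.lam (s u) snd) ∧
  inp (ringSucc v) rcv ∧ (∀ u ∈ M, u ≠ ringSucc v → ¬ inp u rcv) ∧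
  (∀ u ∈ M, P.delta (s u) (inp u) (s' u)) ∧
  ∀ u, u ∉ M → s' u = s u

/-- Global transition of the *fully asynchronous* token ring. -/
def asyncStep (P : RawProc Q O I) (snd : O) (rcv : I) {n : ℕ} (M : Set (Fin n))
    (s : Fin n → Q) (inp : Fin n → I → Prop) (s' : Fin n → Q) : Prop :=
  P.internalStep snd rcv M s inp s' ∨ ∃ v, P.tokenStepFrom snd rcv v M s inp s'

/-- Global transition of the *interleaving* token ring: exactly one process takes an
internal transition, or one process passes the token to its ring successor. -/
def interleavingStep (P : RawProc Q O I) (snd : O) (rcv : I) {n : ℕ} (M : Set (Fin n))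
    (s : Fin n → Q) (inp : Fin n → I → Prop) (s' : Fin n → Q) : Prop :=
  (∃ v : Fin n, M = {v} ∧ P.internalStep snd rcv M s inp s') ∨
  (∃ v : Fin n, M = {v, ringSucc v} ∧ P.tokenStepFrom snd rcv v M s inp s')

/-- Global transition of the *synchronous* token ring: all processes move. -/
def syncStep (P : RawProc Q O I) (snd : O) (rcv : I) {n : ℕ} (M : Set (Fin n))
    (s : Fin n → Q) (inp : Fin n → I → Prop) (s' : Fin n → Q) : Prop :=
  M = Set.univ ∧ P.asyncStep snd rcv M s inp s'

/-- Condition (a): in every sending state the process ignores its inputs —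
there is a unique successor, the same for every input letter. -/
def CondA (P : RawProc Q O I) (snd : O) : Prop :=
  ∀ q, P.lam q snd → ∃ q', ∀ (ins : I → Prop) (q'' : Q), P.delta q ins q'' ↔ q'' = q'

/-- The axioms making raw process data a process template (for distinguished output
`snd` and input `rcv`): the initial states have/lack the token, only token states can
output `snd`, transitions respect the token structure, and the transition relation is
non-terminating. -/
def IsTemplate (P : RawProc Q O I) (snd : O) (rcv : I) : Prop :=
  P.tok P.iotaT ∧ ¬ P.tok P.iotaN ∧
  (∀ q, P.lam q snd → P.tok q) ∧
  (∀ q ins q', P.delta q ins q' →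
      (P.tok q → ¬ ins rcv) ∧
      (P.lam q snd → ¬ P.tok q') ∧
      (P.tok q → ¬ P.lam q snd → P.tok q') ∧
      (¬ P.tok q → ins rcv → P.tok q') ∧
      (¬ P.tok q → ¬ ins rcv → ¬ P.tok q')) ∧
  (∀ q ins, (P.tok q → ¬ ins rcv) → ∃ q', P.delta q ins q')

end RawProc

/-- A process template over output variables `O` (with distinguished `snd`)
and input variables `I` (with distinguished `rcv`): a finite-state labelled
transition system satisfying the token-ring template axioms. -/
structure Template (O I : Type) (snd : O) (rcv : I) : Type 1 where
  Q : Type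
  P : RawProc Q O I
  finQ : Finite Q
  ax : P.IsTemplate snd rcv

/-- A process template together with a local fairness condition `A_loc` (over the
input and output variables) and the requirement (†): from every token state, under
any input sequence such that the resulting local input/output sequence satisfies the
fairness condition, the process eventually reaches a state sending the token. -/
structure TemplateF (O I : Type) (snd : O) (rcv : I) extends Template O I snd rcv where
  fairCond : (ℕ → (I → Prop) × (O → Prop)) → Prop
  tokenLive : ∀ q, P.tok q → ∀ (ins : ℕ → I → Prop) (path : ℕ → Q),
    path 0 = q → (∀ k, P.delta (path k) (ins k) (path (k + 1))) →
    fairCond (fun k => (ins k, P.lam (path k))) → ∃ k, P.lam (path k) snd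

/-- The type of global step relations of a ring of `n` processes with state set `Q`
and input variables `I`. -/
abbrev StepRel (Q I : Type) (n : ℕ) : Type :=
  Set (Fin n) → (Fin n → Q) → (Fin n → I → Prop) → (Fin n → Q) → Prop

/-- A run of a token-ring system built from the process `P`, with global inputs
designated by `isGlob` (global inputs are read identically by all processes),
ring size `n`, and global step relation `R`: an infinite sequence of global states,
input assignments and scheduled sets `M_k`, starting in an initial global state
(each process in one of its initial states, exactly one process having the token). -/
structure SysRun {Q O I : Type} (P : RawProc Q O I) (isGlob : I → Prop) (n : ℕ)
    (R : StepRel Q I n) : Type where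
  state : ℕ → Fin n → Q
  inp : ℕ → Fin n → I → Prop
  sched : ℕ → Set (Fin n)
  init_state : ∀ v, state 0 v = P.iotaT ∨ state 0 v = P.iotaN
  init_token : ∃! v, P.tok (state 0 v)
  glob_consistent : ∀ k v w a, isGlob a → (inp k v a ↔ inp k w a)
  step : ∀ k, R (sched k) (state k) (inp k) (state (k + 1))

namespace SysRun

variable {Q O I : Type} {P : RawProc Q O I} {isGlob : I → Prop} {n : ℕ} {R : StepRel Q I n}

/-- Process `j` makes transitions infinitely often along the run. -/
def MovesInf (x : SysRun P isGlob n R) (j : Fin n) : Prop :=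
  {k : ℕ | j ∈ x.sched k}.Infinite

/-- The position (in the run) of the `t`-th transition of process `j`. -/
noncomputable def localIdx (x : SysRun P isGlob n R) (j : Fin n) (t : ℕ) : ℕ :=
  Nat.nth (fun k => j ∈ x.sched k) t

/-- The local run of process `j`, as an infinite word over the atomic propositions
`O ⊕ I` (outputs and inputs of process `j`): the projection of the run to the
positions where `j` makes a transition. -/
noncomputable def localWord (x : SysRun P isGlob n R) (j : Fin n) : ℕ → O ⊕ I → Prop :=
  fun t => Sum.elim (P.lam (x.state (x.localIdx j t) j)) (x.inp (x.localIdx j t) j)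

/-- The local run of process `j` satisfies the LTL formula `φ` over the inputs
and outputs of a single process (vacuously, if `j` moves only finitely often). -/
def LocalSat (x : SysRun P isGlob n R) (φ : LTL (O ⊕ I)) (j : Fin n) : Prop :=
  x.MovesInf j → LTL.Sat (x.localWord j) φ 0

/-- The global output word of the pair of processes `(i, j)`, over the atomic
propositions `O ⊕ O` (outputs of `i` and of `j`). -/
def outWord2 (x : SysRun P isGlob n R) (i j : Fin n) : ℕ → O ⊕ O → Prop :=
  fun k => Sum.elim (P.lam (x.state k i)) (P.lam (x.state k j))

/-- The run satisfies the 2-indexed formula `ψ(i,j)` (over outputs only),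
evaluated on the global output sequence. -/
def Sat2At (x : SysRun P isGlob n R) (ψ : LTL (O ⊕ O)) (i j : Fin n) : Prop :=
  LTL.Sat (x.outWord2 i j) ψ 0

end SysRun

/-- The system satisfies `A_{∀i.ass(i)} ∀j.φ(j)`: every run all of whose local runs
satisfy `ass` has all of its local runs satisfying `φ`. -/
def SatSpec1 {Q O I : Type} (P : RawProc Q O I) (isGlob : I → Prop) (n : ℕ)
    (R : StepRel Q I n) (ass φ : LTL (O ⊕ I)) : Prop :=
  ∀ x : SysRun P isGlob n R, (∀ i, x.LocalSat ass i) → ∀ j, x.LocalSat φ j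

/-- The system satisfies `A_{∀i.ass(i)} ∀i,j.ψ(i,j)`. -/
def SatSpec2 {Q O I : Type} (P : RawProc Q O I) (isGlob : I → Prop) (n : ℕ)
    (R : StepRel Q I n) (ass : LTL (O ⊕ I)) (ψ : LTL (O ⊕ O)) : Prop :=
  ∀ x : SysRun P isGlob n R, (∀ i, x.LocalSat ass i) → ∀ i j, i ≠ j → x.Sat2At ψ i j

/-- The system satisfies `∀i,j. A ψ(i,j)` (no assumptions). -/
def SatSpec2NoAss {Q O I : Type} (P : RawProc Q O I) (isGlob : I → Prop) (n : ℕ)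
    (R : StepRel Q I n) (ψ : LTL (O ⊕ O)) : Prop :=
  ∀ x : SysRun P isGlob n R, ∀ i j, i ≠ j → x.Sat2At ψ i j

open LTL in
/-- The token-ring guarantees `TR(j)`:
`□(send → tok) ∧ □(tok ∧ ¬send → X tok) ∧ □(¬tok ∧ ¬rcv → X ¬tok) ∧ □(tok → ◇send)`,
as an LTL formula over the outputs (`snd`, and the output `tokV` marking token states)
and inputs (`rcv`) of a single process. -/
def TRformula {O I : Type} (snd tokV : O) (rcv : I) : LTL (O ⊕ I) :=
  (alw ((atom (Sum.inl snd)).imp (atom (Sum.inl tokV)))).conj <|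
  (alw (((atom (Sum.inl tokV)).conj (neg (atom (Sum.inl snd)))).imp
      (next (atom (Sum.inl tokV))))).conj <|
  (alw (((neg (atom (Sum.inl tokV))).conj (neg (atom (Sum.inr rcv)))).imp
      (next (neg (atom (Sum.inl tokV)))))).conj
  (alw ((atom (Sum.inl tokV)).imp (ev (atom (Sum.inl snd)))))


/-! ## Auxiliary lemmas -/

namespace LTL

theorem sat_imp_iff {α : Type} (w : ℕ → α → Prop) (φ ψ : LTL α) (k : ℕ) :
    Sat w (φ.imp ψ) k ↔ (Sat w φ k → Sat w ψ k) := by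
  simp only [imp, Sat]; tauto

theorem sat_ev_iff {α : Type} (w : ℕ → α → Prop) (φ : LTL α) (k : ℕ) :
    Sat w (ev φ) k ↔ ∃ m, k ≤ m ∧ Sat w φ m := by
  simp only [ev, Sat]
  constructor
  · rintro ⟨m, h1, h2, -⟩; exact ⟨m, h1, h2⟩
  · rintro ⟨m, h1, h2⟩; exact ⟨m, h1, h2, fun _ _ _ => trivial⟩

theorem sat_alw_iff {α : Type} (w : ℕ → α → Prop) (φ : LTL α) (k : ℕ) :
    Sat w (alw φ) k ↔ ∀ m, k ≤ m → Sat w φ m := by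
  simp only [alw, Sat, sat_ev_iff]
  push_neg
  constructor
  · intro h m hm; by_contra hc
    exact hc (h m hm)
  · intro h m hm; exact h m hm

end LTL

/-- Auxiliary notion: process `v` is the unique token holder at time `k`. -/
def TokHolder {Q O I : Type} {P : RawProc Q O I} {isGlob : I → Prop} {n : ℕ}
    {R : StepRel Q I n} (x : SysRun P isGlob n R) (k : ℕ) (v : Fin n) : Prop :=
  P.tok (x.state k v) ∧ ∀ u, u ≠ v → ¬ P.tok (x.state k u)

theorem ringSucc_ne {n : ℕ} (hn : 2 ≤ n) (v : Fin n) : ringSucc v ≠ v := by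
  intro h
  have h2 : (v.val + 1) % n = v.val := congrArg Fin.val h
  have hv := v.isLt
  rcases Nat.lt_or_ge (v.val + 1) n with h1 | h1
  · rw [Nat.mod_eq_of_lt h1] at h2; omega
  · have he : v.val + 1 = n := by omega
    rw [he, Nat.mod_self] at h2
    omega


open LTL in
/-- soundness of localization of assumptions in token rings:
if the synchronous ring `P^{R(n)}` (`n ≥ 2`) satisfies the 1-indexed specification
`∀j. A[(ass(j) → TR(j)) ∧ ((ass(j) ∧ □◇tok_j) → gua(j))]`, then it satisfies
`A_{∀i.ass(i)} ∀j.(gua(j) ∧ TR(j))`. Here `tokV` is an output marking exactly the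
token states. -/
theorem localization_of_assumptions_sound
    {O I : Type} (snd tokV : O) (rcv : I) (isGlob : I → Prop)
    (T : Template O I snd rcv)
    (htok : ∀ q, T.P.lam q tokV ↔ T.P.tok q)
    (ass gua : LTL (O ⊕ I)) (n : ℕ) (hn : 2 ≤ n)
    (h : ∀ x : SysRun T.P isGlob n (T.P.syncStep snd rcv), ∀ j,
        x.LocalSat ((ass.imp (TRformula snd tokV rcv)).conj
          ((ass.conj (alw (ev (atom (Sum.inl tokV))))).imp gua)) j) :
    ∀ x : SysRun T.P isGlob n (T.P.syncStep snd rcv),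
      (∀ i, x.LocalSat ass i) →
      ∀ j, x.LocalSat (gua.conj (TRformula snd tokV rcv)) j := by
    classical
  obtain ⟨hax1, hax2, hax3, hax4, hax5⟩ := T.ax
  intro x hass j
  have hnpos : 0 < n := by omega
  have hsched : ∀ k, x.sched k = Set.univ := fun k => (x.step k).1
  have hmv : ∀ i : Fin n, x.MovesInf i := by
    intro i
    have he : {k : ℕ | i ∈ x.sched k} = Set.univ := by
      ext k; simp [hsched k]
    rw [SysRun.MovesInf, he]; exact Set.infinite_univ
  have hidx : ∀ (i : Fin n) (t : ℕ), x.localIdx i t = t := by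
    intro i t
    have hp : ∀ k, i ∈ x.sched k := by intro k; simp [hsched k]
    have hc : Nat.count (fun k => i ∈ x.sched k) t = t := by
      induction t with
      | zero => simp
      | succ t ih => rw [Nat.count_succ, ih, if_pos (hp t)]
    have := Nat.nth_count (p := fun k => i ∈ x.sched k) (hp t)
    rw [hc] at this
    exact this
  have hword : ∀ (i : Fin n), x.localWord i =
      fun t => Sum.elim (T.P.lam (x.state t i)) (x.inp t i) := by
    intro i; funext t; rw [SysRun.localWord, hidx]
  have hTRgua := fun i : Fin n => h x i (hmv i)
  have hTR : ∀ i, LTL.Sat (x.localWord i) (TRformula snd tokV rcv) 0 := by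
    intro i
    exact (LTL.sat_imp_iff _ _ _ _).1 (hTRgua i).1 (hass i (hmv i))
  -- the fourth conjunct of TR : □(tok → ◇ snd)
  have hTR4 : ∀ (i : Fin n) (m : ℕ), T.P.tok (x.state m i) →
      ∃ m', m ≤ m' ∧ T.P.lam (x.state m' i) snd := by
    intro i m hm
    have h4 := (hTR i).2.2.2
    rw [LTL.sat_alw_iff] at h4
    have h5 := (LTL.sat_imp_iff _ _ _ _).1 (h4 m (Nat.zero_le m)) ?_
    · rw [LTL.sat_ev_iff] at h5
      obtain ⟨m', hm1, hm2⟩ := h5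
      refine ⟨m', hm1, ?_⟩
      have : x.localWord i m' (Sum.inl snd) := hm2
      rwa [hword i] at this
    · show x.localWord i m (Sum.inl tokV)
      rw [hword i]
      exact (htok _).2 hm
  -- step lemma, no-send case
  have stepA : ∀ (k : ℕ) (v : Fin n), TokHolder x k v →
      ¬ T.P.lam (x.state k v) snd → TokHolder x (k + 1) v := by
    rintro k v ⟨htv, hou⟩ hns
    obtain ⟨hM, hstep⟩ := x.step k
    have hmem : ∀ u : Fin n, u ∈ x.sched k := by intro u; rw [hM]; trivial
    rcases hstep with ⟨hint, -⟩ | ⟨u0, hts⟩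
    · constructor
      · obtain ⟨h1, h2, h3⟩ := hint v (hmem v)
        exact (hax4 _ _ _ h3).2.2.1 htv h1
      · intro u hu
        obtain ⟨h1, h2, h3⟩ := hint u (hmem u)
        exact (hax4 _ _ _ h3).2.2.2.2 (hou u hu) h2
    · exfalso
      obtain ⟨-, -, hsnd, -⟩ := hts
      have : u0 = v := by
        by_contra hc
        exact hou u0 hc (hax3 _ hsnd)
      rw [this] at hsnd
      exact hns hsnd
  -- step lemma, send case
  have stepB : ∀ (k : ℕ) (v : Fin n), TokHolder x k v →
      T.P.lam (x.state k v) snd → TokHolder x (k + 1) (ringSucc v) := by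
    rintro k v ⟨htv, hou⟩ hs
    obtain ⟨hM, hstep⟩ := x.step k
    have hmem : ∀ u : Fin n, u ∈ x.sched k := by intro u; rw [hM]; trivial
    rcases hstep with ⟨hint, -⟩ | ⟨u0, hts⟩
    · exact absurd hs (hint v (hmem v)).1
    obtain ⟨-, -, hsnd, honlysnd, hrcv, honlyrcv, hdel, -⟩ := hts
    have hu0 : u0 = v := by
      by_contra hc
      exact hou u0 hc (hax3 _ hsnd)
    subst hu0
    have hne := ringSucc_ne hn u0
    constructor
    · have hd := hdel (ringSucc u0) (hmem _)
      exact (hax4 _ _ _ hd).2.2.2.1 (hou _ hne) hrcv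
    · intro u hu
      by_cases huv : u = u0
      · subst huv
        have hd := hdel u (hmem u)
        exact (hax4 _ _ _ hd).2.1 hsnd
      · have hd := hdel u (hmem u)
        have hnr : ¬ x.inp k u rcv := honlyrcv u (hmem u) hu
        exact (hax4 _ _ _ hd).2.2.2.2 (hou u huv) hnr
  -- invariant: there is always a unique token holder
  have hinv : ∀ k, ∃ v : Fin n, TokHolder x k v := by
    intro k; induction k with
    | zero =>
      obtain ⟨v, hv, huniq⟩ := x.init_token
      exact ⟨v, hv, fun u hu ht => hu (huniq u ht)⟩
    | succ k ih =>
      obtain ⟨v, hv⟩ := ih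
      by_cases hs : T.P.lam (x.state k v) snd
      · exact ⟨_, stepB k v hv hs⟩
      · exact ⟨v, stepA k v hv hs⟩
  -- the token holder eventually sends (staying the holder until then)
  have hsendev : ∀ (k : ℕ) (v : Fin n), TokHolder x k v →
      ∃ m, k ≤ m ∧ TokHolder x m v ∧ T.P.lam (x.state m v) snd := by
    intro k v hv
    have hP : ∃ m, k ≤ m ∧ T.P.lam (x.state m v) snd := hTR4 v k hv.1
    set m := Nat.find hP with hmdef
    obtain ⟨hkm, hsnd⟩ := Nat.find_spec hP
    have hhold : ∀ l, k ≤ l → l ≤ m → TokHolder x l v := by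
      intro l hl
      induction l, hl using Nat.le_induction with
      | base => intro _; exact hv
      | succ l hkl ih =>
        intro hlm
        have hlt : l < m := by omega
        have hns : ¬ T.P.lam (x.state l v) snd := by
          have := Nat.find_min hP hlt
          push_neg at this
          exact this hkl
        exact stepA l v (ih (by omega)) hns
    exact ⟨m, hkm, hhold m hkm le_rfl, hsnd⟩
  -- the token reaches any vertex at distance d
  have hreach : ∀ (d k : ℕ) (v : Fin n), TokHolder x k v →
      ∃ m, k ≤ m ∧ TokHolder x m ⟨(v.val + d) % n, Nat.mod_lt _ hnpos⟩ := by
    intro d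
    induction d with
    | zero =>
      intro k v hv
      refine ⟨k, le_rfl, ?_⟩
      have : (⟨(v.val + 0) % n, Nat.mod_lt _ hnpos⟩ : Fin n) = v := by
        apply Fin.ext
        simp [Nat.mod_eq_of_lt v.isLt]
      rwa [this]
    | succ d ih =>
      intro k v hv
      obtain ⟨m, hkm, hm⟩ := ih k v hv
      obtain ⟨m', hmm', hm', hsend⟩ := hsendev m _ hm
      have hstep := stepB m' _ hm' hsend
      refine ⟨m' + 1, by omega, ?_⟩
      have he : ringSucc (⟨(v.val + d) % n, Nat.mod_lt _ hnpos⟩ : Fin n) =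
          ⟨(v.val + (d + 1)) % n, Nat.mod_lt _ hnpos⟩ := by
        apply Fin.ext
        show ((v.val + d) % n + 1) % n = (v.val + (d + 1)) % n
        rw [Nat.mod_add_mod]
        ring_nf
      rwa [he] at hstep
  -- the token visits every process infinitely often
  have htokio : ∀ (i : Fin n) (k : ℕ), ∃ m, k ≤ m ∧ T.P.tok (x.state m i) := by
    intro i k
    obtain ⟨v, hv⟩ := hinv k
    obtain ⟨m, hkm, hm⟩ := hreach ((i.val + n - v.val) % n) k v hv
    have he : (⟨(v.val + (i.val + n - v.val) % n) % n, Nat.mod_lt _ hnpos⟩ : Fin n) = i := by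
      apply Fin.ext
      show (v.val + (i.val + n - v.val) % n) % n = i.val
      rw [Nat.add_mod_mod]
      have hvlt := v.isLt
      have : v.val + (i.val + n - v.val) = i.val + n := by omega
      rw [this, Nat.add_mod_right, Nat.mod_eq_of_lt i.isLt]
    rw [he] at hm
    exact ⟨m, hkm, hm.1⟩
  -- assemble
  intro _
  refine ⟨?_, hTR j⟩
  apply (LTL.sat_imp_iff _ _ _ _).1 (hTRgua j).2
  refine ⟨hass j (hmv j), ?_⟩
  rw [LTL.sat_alw_iff]
  intro m _
  rw [LTL.sat_ev_iff]
  obtain ⟨m', hm', ht⟩ := htokio j m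
  refine ⟨m', hm', ?_⟩
  show x.localWord j m' (Sum.inl tokV)
  rw [hword j]
  exact (htok _).2 ht
end

section
/- Correctness of the bounded-synthesis ranking-function encoding: let G = (V, E) be a finite directed graph, Init ⊆ V a set of initial vertices, and F ⊆ V a set of accepting vertices. There exists a function ρ : V → ℤ such that ρ(v) ≥ 0 for every v ∈ Init, and for every edge (u, w) ∈ E with ρ(u) ≥ 0 one has ρ(w) > ρ(u) if w ∈ F and ρ(w) ≥ ρ(u) if w ∉ F, if and only if no cycle of G that is reachable from Init contains a vertex of F. -/
/-- correctness of the bounded-synthesis ranking-function encoding: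
for a finite directed graph `(V, E)` with initial vertices `Init` and accepting
vertices `F`, there exists a ranking function `ρ : V → ℤ` with `ρ(v) ≥ 0` on `Init`
such that along every edge `(u,w)` with `ρ(u) ≥ 0` the rank strictly increases if
`w ∈ F` and does not decrease otherwise, if and only if no cycle of the graph that is
reachable from `Init` contains a vertex of `F`. -/
theorem bounded_synthesis_ranking_correct
    {V : Type} [Fintype V] (E : Set (V × V)) (Init F : Set V) :
    (∃ ρ : V → ℤ, (∀ v ∈ Init, 0 ≤ ρ v) ∧
        ∀ u w, (u, w) ∈ E → 0 ≤ ρ u →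
          ((w ∈ F → ρ u < ρ w) ∧ (w ∉ F → ρ u ≤ ρ w))) ↔
    ¬ ∃ v, v ∈ F ∧
        (∃ i ∈ Init, Relation.ReflTransGen (fun a b => (a, b) ∈ E) i v) ∧
        Relation.TransGen (fun a b => (a, b) ∈ E) v v := by
  classical
  set R : V → V → Prop := fun a b => (a, b) ∈ E with hR
  constructor
  · rintro ⟨ρ, hInit, hEdge⟩ ⟨v, hvF, ⟨i, hiInit, hiv⟩, hcyc⟩
    -- ρ is ≥ its start and ≥ 0 along any reachable path
    have mono : ∀ {a b}, Relation.ReflTransGen R a b → 0 ≤ ρ a → ρ a ≤ ρ b := by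
      intro a b hab
      induction hab with
      | refl => intro _; exact le_refl _
      | @tail b c hxc hcb ih =>
        intro ha
        have h1 := ih ha
        have h2 := hEdge _ _ hcb (le_trans ha h1)
        by_cases hF : c ∈ F
        · exact le_trans h1 (le_of_lt (h2.1 hF))
        · exact le_trans h1 (h2.2 hF)
    have hv0 : 0 ≤ ρ v := le_trans (hInit i hiInit) (mono hiv (hInit i hiInit))
    obtain ⟨c, hvc, hcv⟩ := (Relation.TransGen.tail'_iff).mp hcyc
    have hc0 : 0 ≤ ρ c := le_trans hv0 (mono hvc hv0)
    have := (hEdge c v hcv hc0).1 hvF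
    have := mono hvc hv0
    omega
  · intro hno
    -- reachable from Init
    set Reach : V → Prop := fun v => ∃ i ∈ Init, Relation.ReflTransGen R i v with hReach
    set S : V → Set V := fun v => {f | f ∈ F ∧ Reach f ∧ Relation.ReflTransGen R f v} with hS
    refine ⟨fun v => if Reach v then ((S v).ncard : ℤ) else -1, ?_, ?_⟩
    · intro v hv
      have : Reach v := ⟨v, hv, Relation.ReflTransGen.refl⟩
      simp [this]
    · intro u w huw hu
      have hur : Reach u := by
        by_contra h
        simp [h] at hu
      obtain ⟨i, hi, hiu⟩ := id hur
      have hwr : Reach w := ⟨i, hi, hiu.tail huw⟩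
      have hsub : S u ⊆ S w := by
        rintro f ⟨hf1, hf2, hf3⟩
        exact ⟨hf1, hf2, hf3.tail huw⟩
      have hfin : (S w).Finite := Set.toFinite _
      constructor
      · intro hwF
        have hwSw : w ∈ S w := ⟨hwF, hwr, Relation.ReflTransGen.refl⟩
        have hwSu : w ∉ S u := by
          rintro ⟨_, _, hwu⟩
          exact hno ⟨w, hwF, hwr, (Relation.TransGen.tail'_iff).mpr ⟨u, hwu, huw⟩⟩
        have : (S u).ncard < (S w).ncard :=
          Set.ncard_lt_ncard (Set.ssubset_iff_of_subset hsub |>.mpr ⟨w, hwSw, hwSu⟩) hfin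
        simp only []
        rw [if_pos hur, if_pos hwr]
        exact_mod_cast this
      · intro _
        have : (S u).ncard ≤ (S w).ncard := Set.ncard_le_ncard hsub hfin
        simp only []
        rw [if_pos hur, if_pos hwr]
        exact_mod_cast this
end
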